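/- (Equivalence of discounted FTRL and L2-regularized OGD.) Let λ ∈ (0,1), η > 0, set γ := (1−λ)·η^{-1}, and let g_1, g_2, … ∈ ℝ^d. Consider OGD with learning rate η on the regularized losses f_t(x) := ⟨g_t, x⟩ + (γ/2)·‖x‖², starting from x_1 = 0 with updates x_{t+1} = x_t − η·g_t − η·γ·x_t on the domain ℝ^d. Then for all t ≥ 1: x_{t+1} = −η·Σ_{i=1}^t (1−ηγ)^{t−i}·g_i = −η·Σ_{i=1}^t λ^{t−i}·g_i; that is, the iterates coincide with those of discounted FTRL with linear prediction function φ_{t+1}(x) = η·λ^{t-1}·x applied to the rescaled gradient sums −Σ_{i=1}^t λ^{1−i}·g_i. -/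

import Mathlib

open scoped BigOperators

/-- Equivalence of `L2`-regularized OGD (with weight `γ = (1−λ)/η`) and
discounted FTRL with the linear prediction function `φ_{t+1}(y) = η·λ^{t-1}·y` applied to the
rescaled gradient sums `−Σ_{i=1}^t λ^{1−i} g_i`. -/
theorem regularized_ogd_eq_discounted_ftrl
    (d : ℕ) (lam η : ℝ) (hlam0 : 0 < lam) (hlam1 : lam < 1) (hη : 0 < η)
    (γ : ℝ) (hγ : γ = (1 - lam) * η⁻¹)
    (g x : ℕ → EuclideanSpace ℝ (Fin d))
    (hx1 : x 1 = 0)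
    (hrec : ∀ t, 1 ≤ t → x (t+1) = x t - η • g t - (η * γ) • x t) :
    ∀ t, 1 ≤ t →
      x (t+1) = (-η) • ∑ i ∈ Finset.Icc 1 t, (1 - η * γ)^(t-i) • g i
      ∧ x (t+1) = (-η) • ∑ i ∈ Finset.Icc 1 t, lam^(t-i) • g i
      ∧ x (t+1) = (η * lam^(t-1)) •
          (-(∑ i ∈ Finset.Icc 1 t, (lam ^ ((1:ℤ) - (i:ℤ))) • g i)) := by
  have hη' : η ≠ 0 := ne_of_gt hη
  have hlg : 1 - η * γ = lam := by
    rw [hγ]; field_simp; ring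
  have hmain : ∀ t, 1 ≤ t →
      x (t+1) = (-η) • ∑ i ∈ Finset.Icc 1 t, lam^(t-i) • g i := by
    intro t ht
    induction t with
    | zero => omega
    | succ n ih =>
      rcases Nat.eq_or_lt_of_le ht with h1 | h1
      · -- n + 1 = 1, i.e. n = 0
        have hn : n = 0 := by omega
        subst hn
        simp [hrec 1 le_rfl, hx1]
      · have hn : 1 ≤ n := by omega
        have ihn := ih hn
        have hr := hrec (n+1) (by omega)
        rw [hr, ihn]
        rw [Finset.sum_Icc_succ_top (by omega : 1 ≤ n+1)]
        have hsum : ∑ i ∈ Finset.Icc 1 n, lam ^ (n + 1 - i) • g i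
            = lam • ∑ i ∈ Finset.Icc 1 n, lam ^ (n - i) • g i := by
          rw [Finset.smul_sum]
          apply Finset.sum_congr rfl
          intro i hi
          simp only [Finset.mem_Icc] at hi
          rw [smul_smul]
          congr 1
          have : n + 1 - i = (n - i) + 1 := by omega
          rw [this, pow_succ]
          ring
        rw [smul_add, hsum]
        simp only [Nat.sub_self, pow_zero, one_smul]
        have hηγ : η * γ = 1 - lam := by linarith [hlg]
        rw [hηγ]
        module
  intro t ht
  have h2 := hmain t ht
  refine ⟨by rw [hlg]; exact h2, h2, ?_⟩
  rw [h2, smul_neg, Finset.smul_sum, Finset.smul_sum, ← Finset.sum_neg_distrib]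
  apply Finset.sum_congr rfl
  intro i hi
  simp only [Finset.mem_Icc] at hi
  rw [smul_smul, smul_smul, ← neg_smul]
  congr 1
  have hlam : lam ≠ 0 := ne_of_gt hlam0
  have h1 : (lam : ℝ) ^ (t - i) = lam ^ ((t : ℤ) - (i : ℤ)) := by
    rw [← zpow_natCast]
    congr 1
    omega
  have h2 : (lam : ℝ) ^ (t - 1) = lam ^ ((t : ℤ) - 1) := by
    rw [← zpow_natCast]
    congr 1
    omega
  rw [h1, h2, mul_assoc, ← zpow_add₀ hlam]
  have h3 : (t:ℤ) - 1 + (1 - i) = (t:ℤ) - i := by ring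
  rw [h3]
  ring
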